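/- In a strongly 2-primal ring (a ring in which every prime ideal is completely prime), every right strongly π-regular element is strongly π-regular. -/
import Mathlib

namespace Stmt6Aux

variable {R : Type*} [Ring R]

/-- A (not necessarily completely) prime proper two-sided ideal. -/
def IsPr (P : TwoSidedIdeal R) : Prop :=
  P ≠ ⊤ ∧ ∀ I J : TwoSidedIdeal R, (∀ i ∈ I, ∀ j ∈ J, i * j ∈ P) → I ≤ P ∨ J ≤ P

/-- The additive subgroup generated by all `s * u * t`. -/
def M (u : R) : AddSubgroup R := AddSubgroup.closure {y : R | ∃ s t : R, y = s * u * t}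

lemma mem_M_self (u : R) : u ∈ M u :=
  AddSubgroup.subset_closure ⟨1, 1, by simp⟩

lemma M_mul_left (u r : R) {f : R} (hf : f ∈ M u) : r * f ∈ M u := by
  refine AddSubgroup.closure_induction (fun y hy => ?_) ?_ (fun y w hy hw h1 h2 => ?_)
    (fun y hy h1 => ?_) hf
  · obtain ⟨s, t, rfl⟩ := hy
    exact AddSubgroup.subset_closure ⟨r * s, t, by simp [mul_assoc]⟩
  · rw [mul_zero]; exact (M u).zero_mem
  · rw [mul_add]; exact (M u).add_mem h1 h2
  · rw [mul_neg]; exact (M u).neg_mem h1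

lemma M_mul_right (u r : R) {f : R} (hf : f ∈ M u) : f * r ∈ M u := by
  refine AddSubgroup.closure_induction (fun y hy => ?_) ?_ (fun y w hy hw h1 h2 => ?_)
    (fun y hy h1 => ?_) hf
  · obtain ⟨s, t, rfl⟩ := hy
    exact AddSubgroup.subset_closure ⟨s, t * r, by simp [mul_assoc]⟩
  · rw [zero_mul]; exact (M u).zero_mem
  · rw [add_mul]; exact (M u).add_mem h1 h2
  · rw [neg_mul]; exact (M u).neg_mem h1

/-- Every element lying in all prime two-sided ideals is nilpotent. -/
lemma exists_prime_avoid {z : R} (hz : ¬ IsNilpotent z) :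
    ∃ P : TwoSidedIdeal R, IsPr P ∧ z ∉ P := by
  classical
  set S : Set (Set R) :=
    {s | 0 ∈ s ∧ (∀ ⦃p q : R⦄, p ∈ s → q ∈ s → p + q ∈ s) ∧
      (∀ (r : R) ⦃p : R⦄, p ∈ s → r * p ∈ s) ∧
      (∀ (r : R) ⦃p : R⦄, p ∈ s → p * r ∈ s) ∧
      ∀ k : ℕ, z ^ (k + 1) ∉ s} with hS
  have hzero : ({0} : Set R) ∈ S := by
    refine ⟨rfl, ?_, ?_, ?_, ?_⟩
    · intro p q hp hq
      rw [Set.mem_singleton_iff] at hp hq ⊢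
      rw [hp, hq, add_zero]
    · intro r p hp
      rw [Set.mem_singleton_iff] at hp ⊢
      rw [hp, mul_zero]
    · intro r p hp
      rw [Set.mem_singleton_iff] at hp ⊢
      rw [hp, zero_mul]
    · intro k hk
      rw [Set.mem_singleton_iff] at hk
      exact hz ⟨k + 1, hk⟩
  have hchainS : ∀ c ⊆ S, IsChain (· ⊆ ·) c → c.Nonempty → ∃ ub ∈ S, ∀ s ∈ c, s ⊆ ub := by
    intro c hc hchain hcne
    obtain ⟨s₀, hs₀⟩ := hcne
    refine ⟨⋃₀ c, ⟨⟨s₀, hs₀, (hc hs₀).1⟩, ?_, ?_, ?_, ?_⟩, fun s hs => Set.subset_sUnion_of_mem hs⟩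
    · rintro p q ⟨s₁, hs₁, hp⟩ ⟨s₂, hs₂, hq⟩
      rcases hchain.total hs₁ hs₂ with h | h
      · exact ⟨s₂, hs₂, (hc hs₂).2.1 (h hp) hq⟩
      · exact ⟨s₁, hs₁, (hc hs₁).2.1 hp (h hq)⟩
    · rintro r p ⟨s₁, hs₁, hp⟩
      exact ⟨s₁, hs₁, (hc hs₁).2.2.1 r hp⟩
    · rintro r p ⟨s₁, hs₁, hp⟩
      exact ⟨s₁, hs₁, (hc hs₁).2.2.2.1 r hp⟩
    · rintro k ⟨s₁, hs₁, hk⟩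
      exact (hc hs₁).2.2.2.2 k hk
  obtain ⟨m, hm0sub, hmax⟩ := zorn_subset_nonempty S hchainS {0} hzero
  obtain ⟨hm0, hmadd, hml, hmr, hmavoid⟩ := hmax.1
  have hmneg : ∀ ⦃p : R⦄, p ∈ m → -p ∈ m := by
    intro p hp
    have := hml (-1) hp
    rwa [neg_one_mul] at this
  refine ⟨TwoSidedIdeal.mk' m hm0 (fun hx hy => hmadd hx hy) (fun hx => hmneg hx)
    (fun {x y} hy => hml x hy) (fun {x y} hx => hmr y hx), ⟨?_, ?_⟩, ?_⟩
  · -- P ≠ ⊤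
    intro h
    have hzmem : z ∈ TwoSidedIdeal.mk' m hm0 (fun hx hy => hmadd hx hy) (fun hx => hmneg hx)
        (fun {x y} hy => hml x hy) (fun {x y} hx => hmr y hx) := by
      rw [h]; exact TwoSidedIdeal.mem_top R
    rw [TwoSidedIdeal.mem_mk'] at hzmem
    exact hmavoid 0 (by simpa using hzmem)
  · -- primality
    intro I J hIJ
    by_contra hcon
    push_neg at hcon
    obtain ⟨hI, hJ⟩ := hcon
    rw [TwoSidedIdeal.le_iff, Set.not_subset] at hI hJ
    obtain ⟨u, huI, huP⟩ := hI
    obtain ⟨v, hvJ, hvP⟩ := hJ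
    rw [SetLike.mem_coe] at huI hvJ
    rw [SetLike.mem_coe, TwoSidedIdeal.mem_mk'] at huP hvP
    -- enlarging by a single element must hit a power of z
    have enlarge : ∀ u : R, u ∉ m →
        ∃ (k : ℕ) (p f : R), p ∈ m ∧ f ∈ M u ∧ z ^ (k + 1) = p + f := by
      intro u hu
      by_contra hno
      push_neg at hno
      have hTS : {w : R | ∃ p ∈ m, ∃ f ∈ M u, w = p + f} ∈ S := by
        refine ⟨⟨0, hm0, 0, (M u).zero_mem, by simp⟩, ?_, ?_, ?_, ?_⟩
        · rintro p q ⟨p1, hp1, f1, hf1, rfl⟩ ⟨p2, hp2, f2, hf2, rfl⟩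
          exact ⟨p1 + p2, hmadd hp1 hp2, f1 + f2, (M u).add_mem hf1 hf2, by abel⟩
        · rintro r p ⟨p1, hp1, f1, hf1, rfl⟩
          exact ⟨r * p1, hml r hp1, r * f1, M_mul_left u r hf1, by rw [mul_add]⟩
        · rintro r p ⟨p1, hp1, f1, hf1, rfl⟩
          exact ⟨p1 * r, hmr r hp1, f1 * r, M_mul_right u r hf1, by rw [add_mul]⟩
        · rintro k ⟨p, hp, f, hf, hw⟩
          exact hno k p f hp hf hw
      have hmT : m ⊆ {w : R | ∃ p ∈ m, ∃ f ∈ M u, w = p + f} :=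
        fun p hp => ⟨p, hp, 0, (M u).zero_mem, by rw [add_zero]⟩
      have hTm := hmax.2 hTS hmT
      exact hu (hTm ⟨0, hm0, u, mem_M_self u, by rw [zero_add]⟩)
    obtain ⟨k, p, f, hp, hf, hzk⟩ := enlarge u huP
    obtain ⟨l, p', f', hp', hf', hzl⟩ := enlarge v hvP
    -- products of the additive parts land in m
    have hgen : ∀ (s t : R), ∀ f' ∈ M v, (s * u * t) * f' ∈ m := by
      intro s t g hg
      refine AddSubgroup.closure_induction (fun y hy => ?_) ?_ (fun y w hy hw h1 h2 => ?_)
        (fun y hy h1 => ?_) hg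
      · obtain ⟨s', t', rfl⟩ := hy
        have hmemP : (u * (t * s')) * v ∈ TwoSidedIdeal.mk' m hm0 (fun hx hy => hmadd hx hy)
            (fun hx => hmneg hx) (fun {x y} hy => hml x hy) (fun {x y} hx => hmr y hx) :=
          hIJ _ (I.mul_mem_right _ _ huI) _ hvJ
        rw [TwoSidedIdeal.mem_mk'] at hmemP
        have heq : (s * u * t) * (s' * v * t') = s * (((u * (t * s')) * v) * t') := by
          noncomm_ring
        rw [heq]
        exact hml s (hmr t' hmemP)
      · rw [mul_zero]; exact hm0
      · rw [mul_add]; exact hmadd h1 h2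
      · rw [mul_neg]; exact hmneg h1
    have hff : ∀ g ∈ M u, ∀ g' ∈ M v, g * g' ∈ m := by
      intro g hg
      refine AddSubgroup.closure_induction (fun y hy => ?_) ?_ (fun y w hy hw h1 h2 => ?_)
        (fun y hy h1 => ?_) hg
      · obtain ⟨s, t, rfl⟩ := hy; exact hgen s t
      · intro g' hg'; rw [zero_mul]; exact hm0
      · intro g' hg'
        rw [add_mul]; exact hmadd (h1 g' hg') (h2 g' hg')
      · intro g' hg'
        rw [neg_mul]; exact hmneg (h1 g' hg')
    have hzz : z ^ ((k + l + 1) + 1) ∈ m := by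
      have hexp : (k + l + 1) + 1 = (k + 1) + (l + 1) := by omega
      rw [hexp, pow_add, hzk, hzl]
      have hsplit : (p + f) * (p' + f') = (p * (p' + f') + f * p') + f * f' := by
        noncomm_ring
      rw [hsplit]
      exact hmadd (hmadd (hmr _ hp) (hml _ hp')) (hff f hf f' hf')
    exact hmavoid (k + l + 1) hzz
  · -- z not in P
    intro h
    rw [TwoSidedIdeal.mem_mk'] at h
    exact hmavoid 0 (by simpa using h)

lemma nil_of_mem_all {z : R} (h : ∀ P : TwoSidedIdeal R, IsPr P → z ∈ P) : IsNilpotent z := by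
  by_contra hz
  obtain ⟨P, hP, hzP⟩ := exists_prime_avoid hz
  exact hzP (h P hP)

/-- Geometric-series one-sided inverse in a "corner". -/
lemma corner_inv (E B w₀ : R) (hE : E * E = E) (hw₀ : w₀ * E = w₀) (hBE : B * E = B)
    (k : ℕ) (hk : (E - w₀ * B) ^ (k + 1) = 0) : ∃ W : R, W * B = E := by
  set ν := E - w₀ * B with hν
  have hw₀B : w₀ * B = E - ν := by rw [hν]; abel
  have hνE : ν * E = ν := by rw [hν, sub_mul, hE, mul_assoc, hBE]
  have key : ∀ j : ℕ, ∃ W, W * B = E - ν ^ (j + 1) := by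
    intro j
    induction j with
    | zero => exact ⟨w₀, by rw [hw₀B, pow_one]⟩
    | succ i ih =>
      obtain ⟨W, hW⟩ := ih
      refine ⟨w₀ + ν * W, ?_⟩
      rw [add_mul, hw₀B, mul_assoc, hW, mul_sub, hνE, ← pow_succ']
      abel
  obtain ⟨W, hW⟩ := key k
  exact ⟨W, by rw [hW, hk, sub_zero]⟩

/-- Lifting an "idempotent modulo all primes" to a true idempotent, keeping
the absorption and prime-membership properties. -/
lemma idem_lift (a x : R) (n : ℕ) (K : ℕ) :
    ∀ e : R, (∀ ℓ, n ≤ ℓ → a ^ ℓ * e = a ^ ℓ) →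
      (∀ P : TwoSidedIdeal R, IsPr P → a ∈ P → e ∈ P) →
      (∀ P : TwoSidedIdeal R, IsPr P → (1 - a * x) ∈ P → (1 - e) ∈ P) →
      (e * e - e) ^ (K + 1) = 0 →
      ∃ E : R, E * E = E ∧ (∀ ℓ, n ≤ ℓ → a ^ ℓ * E = a ^ ℓ) ∧
        (∀ P : TwoSidedIdeal R, IsPr P → a ∈ P → E ∈ P) ∧
        (∀ P : TwoSidedIdeal R, IsPr P → (1 - a * x) ∈ P → (1 - E) ∈ P) := by
  induction K with
  | zero =>
    intro e h1 h2 h3 h4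
    rw [pow_one] at h4
    exact ⟨e, sub_eq_zero.mp h4, h1, h2, h3⟩
  | succ K ih =>
    intro e h1 h2 h3 h4
    have hid : (3 * (e * e) - 2 * (e * e * e)) * (3 * (e * e) - 2 * (e * e * e))
        - (3 * (e * e) - 2 * (e * e * e))
        = ((e * e - e) * (e * e - e)) * (4 * (e * e - e) - 3) := by noncomm_ring
    have hc : Commute ((e * e - e) * (e * e - e)) (4 * (e * e - e) - 3) := by
      show _ * _ = _ * _
      noncomm_ring
    have hdd : ((e * e - e) * (e * e - e)) ^ (K + 1) = 0 := by
      rw [(Commute.refl (e * e - e)).mul_pow, ← pow_add]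
      have hexp : (K + 1) + (K + 1) = (K + 1 + 1) + K := by omega
      rw [hexp, pow_add, h4, zero_mul]
    have hnil : ((3 * (e * e) - 2 * (e * e * e)) * (3 * (e * e) - 2 * (e * e * e))
        - (3 * (e * e) - 2 * (e * e * e))) ^ (K + 1) = 0 := by
      rw [hid, hc.mul_pow, hdd, zero_mul]
    refine ih (3 * (e * e) - 2 * (e * e * e)) ?_ ?_ ?_ hnil
    · intro ℓ hℓ
      have he := h1 ℓ hℓ
      have hee : a ^ ℓ * e * e = a ^ ℓ := by rw [he, he]
      have heee : a ^ ℓ * e * e * e = a ^ ℓ := by rw [he, he, he]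
      calc a ^ ℓ * (3 * (e * e) - 2 * (e * e * e))
          = 3 * (a ^ ℓ * e * e) - 2 * (a ^ ℓ * e * e * e) := by noncomm_ring
        _ = a ^ ℓ := by rw [heee, hee]; noncomm_ring
    · intro P hP haP
      have he := h2 P hP haP
      exact P.sub_mem (P.mul_mem_left _ _ (P.mul_mem_left _ _ he))
        (P.mul_mem_left _ _ (P.mul_mem_right _ _ (P.mul_mem_left _ _ he)))
    · intro P hP hq
      have he := h3 P hP hq
      have hdec : (1 : R) - (3 * (e * e) - 2 * (e * e * e))
          = (1 - e) * ((1 - e) * (1 + 2 * e)) := by noncomm_ring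
      rw [hdec]
      exact P.mul_mem_right _ _ he

end Stmt6Aux

/-- In a strongly 2-primal ring (every prime two-sided ideal is completely
prime), every right strongly π-regular element is strongly π-regular. -/
theorem stmt_6 {R : Type*} [Ring R]
    (h2primal : ∀ P : TwoSidedIdeal R, P ≠ ⊤ →
      (∀ I J : TwoSidedIdeal R, (∀ i ∈ I, ∀ j ∈ J, i * j ∈ P) → I ≤ P ∨ J ≤ P) →
      ∀ a b : R, a * b ∈ P → a ∈ P ∨ b ∈ P)
    (a : R) (ha : ∃ (n : ℕ) (x : R), 0 < n ∧ a ^ n = a ^ (n + 1) * x) :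
    ∃ (n m : ℕ) (x y : R), 0 < n ∧ 0 < m ∧
      a ^ n = a ^ (n + 1) * x ∧ a ^ m = y * a ^ (m + 1) := by
  obtain ⟨n, x, hn, hx⟩ := ha
  have hcp : ∀ P : TwoSidedIdeal R, Stmt6Aux.IsPr P → ∀ u v : R, u * v ∈ P → u ∈ P ∨ v ∈ P :=
    fun P hP => h2primal P hP.1 hP.2
  -- right absorption: a^ℓ * (a*x) = a^ℓ for ℓ ≥ n
  have hstep : ∀ ℓ, n ≤ ℓ → a ^ ℓ * (a * x) = a ^ ℓ := by
    intro ℓ hℓ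
    obtain ⟨j, rfl⟩ := Nat.exists_eq_add_of_le hℓ
    have h1 : a ^ (n + j) = a ^ j * a ^ n := by rw [← pow_add, Nat.add_comm]
    have h2 : a ^ n * (a * x) = a ^ n := by
      rw [← mul_assoc, ← pow_succ]
      exact hx.symm
    rw [h1, mul_assoc, h2]
  -- powers of a in primes
  have hpowP : ∀ P : TwoSidedIdeal R, a ∈ P → ∀ j : ℕ, a ^ (j + 1) ∈ P := by
    intro P haP j
    induction j with
    | zero => simpa using haP
    | succ i ih => rw [pow_succ]; exact P.mul_mem_right _ _ ih
  -- splitting powers with complete primeness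
  have hsplit : ∀ P : TwoSidedIdeal R, Stmt6Aux.IsPr P → ∀ (j : ℕ) (c : R),
      a ^ j * c ∈ P → a ∈ P ∨ c ∈ P := by
    intro P hP j
    induction j with
    | zero =>
      intro c hc
      right; simpa using hc
    | succ i ih =>
      intro c hc
      have hc' : a ^ i * (a * c) ∈ P := by rwa [← mul_assoc, ← pow_succ]
      rcases ih _ hc' with h | h
      · exact Or.inl h
      · rcases hcp P hP a c h with h' | h'
        · exact Or.inl h'
        · exact Or.inr h'
  -- the key dichotomy at each prime
  have hdich : ∀ P : TwoSidedIdeal R, Stmt6Aux.IsPr P →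
      a ∈ P ∨ ((1 - a * x) ∈ P ∧ (1 - x * a) ∈ P) := by
    intro P hP
    have h0 : a ^ n * (1 - a * x) ∈ P := by
      have hz : a ^ n * (1 - a * x) = 0 := by
        rw [mul_sub, mul_one, hstep n le_rfl, sub_self]
      rw [hz]; exact P.zero_mem
    rcases hsplit P hP n _ h0 with h | h
    · exact Or.inl h
    · have h1 : a * (1 - x * a) ∈ P := by
        have he : a * (1 - x * a) = (1 - a * x) * a := by noncomm_ring
        rw [he]; exact P.mul_mem_right _ _ h
      rcases hcp P hP _ _ h1 with h2 | h2
      · exact Or.inl h2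
      · exact Or.inr ⟨h, h2⟩
  -- powers: 1 - x^(j+1) * a^(j+1) ∈ P whenever 1 - x*a ∈ P
  have hxa_pows : ∀ P : TwoSidedIdeal R, (1 - x * a) ∈ P →
      ∀ j : ℕ, (1 - x ^ (j + 1) * a ^ (j + 1)) ∈ P := by
    intro P hxaP j
    induction j with
    | zero => simpa using hxaP
    | succ i ih =>
      have hident : ∀ X A : R, (1 : R) - (x * X) * (A * a)
          = (1 - x * a) + x * ((1 - X * A) * a) := by
        intro X A; noncomm_ring
      rw [pow_succ' x (i + 1), pow_succ a (i + 1), hident (x ^ (i + 1)) (a ^ (i + 1))]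
      exact P.add_mem hxaP (P.mul_mem_left _ _ (P.mul_mem_right _ _ ih))
  -- base almost-idempotent
  have hd0 : ∀ P : TwoSidedIdeal R, Stmt6Aux.IsPr P → ((a * x) * (a * x) - (a * x)) ∈ P := by
    intro P hP
    rcases hdich P hP with h | ⟨h, _⟩
    · have hax : a * x ∈ P := P.mul_mem_right _ _ h
      exact P.sub_mem (P.mul_mem_right _ _ hax) hax
    · have hidq : (a * x) * (a * x) - (a * x) = -((a * x) * (1 - a * x)) := by noncomm_ring
      rw [hidq]
      exact P.neg_mem (P.mul_mem_left _ _ h)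
  obtain ⟨K0, hK0⟩ : IsNilpotent ((a * x) * (a * x) - (a * x)) := Stmt6Aux.nil_of_mem_all hd0
  have hK0' : ((a * x) * (a * x) - (a * x)) ^ (K0 + 1) = 0 := by
    rw [pow_succ, hK0, zero_mul]
  obtain ⟨E, hEE, hEabs, hEmem, hEmem'⟩ :=
    Stmt6Aux.idem_lift a x n K0 (a * x) hstep
      (fun P _ h => P.mul_mem_right _ _ h) (fun _ _ h => h) hK0'
  -- the corner element μ := E - (E * x^(n+1) * E) * a^(n+1) is nilpotent
  have hμmem : ∀ P : TwoSidedIdeal R, Stmt6Aux.IsPr P →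
      (E - (E * x ^ (n + 1) * E) * a ^ (n + 1)) ∈ P := by
    intro P hP
    rcases hdich P hP with h | ⟨h1, h2⟩
    · have hEP : E ∈ P := hEmem P hP h
      have hA : a ^ (n + 1) ∈ P := hpowP P h n
      exact P.sub_mem hEP (P.mul_mem_left _ _ hA)
    · have hEP : (1 - E) ∈ P := hEmem' P hP h1
      have hX : (1 - x ^ (n + 1) * a ^ (n + 1)) ∈ P := hxa_pows P h2 n
      have hdec : ∀ Xp Ap Ee : R, Ee - (Ee * Xp * Ee) * Ap
          = -(1 - Ee) + (1 - Xp * Ap) + (1 - Ee) * (Xp * Ap) + (Ee * Xp) * ((1 - Ee) * Ap) := by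
        intro Xp Ap Ee; noncomm_ring
      rw [hdec (x ^ (n + 1)) (a ^ (n + 1)) E]
      exact P.add_mem (P.add_mem (P.add_mem (P.neg_mem hEP) hX)
        (P.mul_mem_right _ _ hEP)) (P.mul_mem_left _ _ (P.mul_mem_right _ _ hEP))
  obtain ⟨K1, hK1⟩ : IsNilpotent (E - (E * x ^ (n + 1) * E) * a ^ (n + 1)) :=
    Stmt6Aux.nil_of_mem_all hμmem
  have hK1' : (E - (E * x ^ (n + 1) * E) * a ^ (n + 1)) ^ (K1 + 1) = 0 := by
    rw [pow_succ, hK1, zero_mul]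
  obtain ⟨W, hW⟩ := Stmt6Aux.corner_inv E (a ^ (n + 1)) (E * x ^ (n + 1) * E) hEE
    (by rw [mul_assoc, hEE]) (hEabs (n + 1) (Nat.le_succ n)) K1 hK1'
  refine ⟨n, n, x, a ^ n * W, hn, hn, hx, ?_⟩
  rw [mul_assoc, hW]
  exact (hEabs n le_rfl).symm
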